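/- The number of injective maps σ from {0,1,2,3,4,5,6} to ℙ²(𝔽_q) such that, for every 3-element subset T of {0,…,6}, the set σ(T) is collinear if and only if T is one of the seven Fano lines {0,1,2},{0,3,4},{0,5,6},{1,3,5},{1,4,6},{2,3,6},{2,4,5}, equals |PGL₃(𝔽_q)| = q³(q³−1)(q²−1) if q is even, and equals 0 if q is odd. -/

import Mathlib

/-- A set of points of `ℙ²(F)` (the projectivization of `F³`) is collinear if
representative vectors of the points span a subspace of `F³` of dimension at most 2. -/
def IsCollinearSetP2 (F : Type*) [Field F] (S : Set (Projectivization F (Fin 3 → F))) : Prop :=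
  Module.finrank F (Submodule.span F (Projectivization.rep '' S)) ≤ 2

open Matrix Projectivization Submodule Module

section FanoAux

def wZ : Fin 7 → Fin 3 → ZMod 2 :=
  ![![1,1,0], ![1,0,1], ![0,1,1], ![1,0,0], ![0,1,0], ![0,0,1], ![1,1,1]]

def fanoL : Finset (Finset (Fin 7)) :=
  {{0, 1, 2}, {0, 3, 4}, {0, 5, 6}, {1, 3, 5}, {1, 4, 6}, {2, 3, 6}, {2, 4, 5}}

lemma wdet_iff : ∀ i j k : Fin 7, i ≠ j → i ≠ k → j ≠ k →
    (wZ i 0 * wZ j 1 * wZ k 2 - wZ i 0 * wZ j 2 * wZ k 1 - wZ i 1 * wZ j 0 * wZ k 2 +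
      wZ i 1 * wZ j 2 * wZ k 0 + wZ i 2 * wZ j 0 * wZ k 1 - wZ i 2 * wZ j 1 * wZ k 0 = 0 ↔
      ({i, j, k} : Finset (Fin 7)) ∈ fanoL) := by decide

lemma third_point : ∀ i j : Fin 7, i ≠ j →
    ∃ k, i ≠ k ∧ j ≠ k ∧ ({i,j,k} : Finset (Fin 7)) ∉ fanoL := by decide

def fanoVec (F : Type*) [Field F] : Fin 7 → Fin 3 → F :=
  ![![1,1,0], ![1,0,1], ![0,1,1], ![1,0,0], ![0,1,0], ![0,0,1], ![1,1,1]]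

variable {F : Type*} [Field F]

lemma range_three {α : Type*} (x : Fin 3 → α) : Set.range x = {x 0, x 1, x 2} := by
  ext a
  constructor
  · rintro ⟨i, rfl⟩; fin_cases i <;> simp
  · rintro (rfl | rfl | rfl) <;> exact ⟨_, rfl⟩

lemma span_reps_three (p : Fin 3 → Projectivization F (Fin 3 → F)) :
    Projectivization.rep '' ({p 0, p 1, p 2} : Set (Projectivization F (Fin 3 → F))) =
      Set.range fun i => (p i).rep := by
  rw [range_three]
  simp [Set.image_insert_eq]

lemma collinear_iff_reps (p : Fin 3 → Projectivization F (Fin 3 → F)) :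
    IsCollinearSetP2 F {p 0, p 1, p 2} ↔ ¬ LinearIndependent F fun i => (p i).rep := by
  unfold IsCollinearSetP2
  rw [span_reps_three, linearIndependent_iff_card_eq_finrank_span]
  have hle : (Set.range fun i => (p i).rep).finrank F ≤ 3 := by
    simpa using finrank_range_le_card fun i => (p i).rep
  simp only [Fintype.card_fin]
  unfold Set.finrank at *
  omega

lemma units_smul_indep_iff {ι : Type*} (a : ι → Fˣ) (x : ι → Fin 3 → F) :
    (LinearIndependent F fun i => (a i : F) • x i) ↔ LinearIndependent F x := by
  constructor
  · intro h
    have := h.units_smul fun i => (a i)⁻¹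
    convert this using 1
    funext i
    simp [Units.smul_def, smul_smul]
  · intro h
    exact h.units_smul a

lemma collinear_iff_of_eq_mk (p : Fin 3 → Projectivization F (Fin 3 → F))
    (x : Fin 3 → Fin 3 → F)
    (hx : ∀ i, x i ≠ 0) (hp : ∀ i, p i = Projectivization.mk F (x i) (hx i)) :
    IsCollinearSetP2 F {p 0, p 1, p 2} ↔ ¬ LinearIndependent F x := by
  rw [collinear_iff_reps]
  have ha : ∀ i, ∃ a : Fˣ, (a : F) • x i = (p i).rep := by
    intro i
    rw [hp i]
    exact exists_smul_eq_mk_rep F (x i) (hx i)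
  choose a haa using ha
  rw [show (fun i => (p i).rep) = fun i => (a i : F) • x i from funext fun i => (haa i).symm]
  rw [units_smul_indep_iff]

lemma fanoVec_ne_zero (i : Fin 7) : fanoVec F i ≠ 0 := by
  fin_cases i <;> intro h
  exacts [one_ne_zero (congrFun h 0), one_ne_zero (congrFun h 0), one_ne_zero (congrFun h 1),
    one_ne_zero (congrFun h 0), one_ne_zero (congrFun h 1), one_ne_zero (congrFun h 2),
    one_ne_zero (congrFun h 0)]

lemma indep_three_iff_det (x : Fin 3 → Fin 3 → F) :
    LinearIndependent F x ↔ (Matrix.of x).det ≠ 0 := by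
  rw [show (LinearIndependent F x) = (LinearIndependent F (Matrix.of x).row) from rfl,
    Matrix.linearIndependent_rows_iff_isUnit, Matrix.isUnit_iff_isUnit_det, isUnit_iff_ne_zero]

lemma detZ_iff (i j k : Fin 7) (hij : i ≠ j) (hik : i ≠ k) (hjk : j ≠ k) :
    ((Matrix.of ![wZ i, wZ j, wZ k]).det = 0 ↔ ({i,j,k} : Finset (Fin 7)) ∈ fanoL) := by
  rw [Matrix.det_fin_three]
  simp only [Matrix.of_apply, Matrix.cons_val', Matrix.cons_val_zero, Matrix.cons_val_one,
    Matrix.head_cons, Matrix.cons_val_two, Matrix.tail_cons, Matrix.empty_val',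
    Matrix.cons_val_fin_one, Matrix.head_fin_const]
  exact wdet_iff i j k hij hik hjk

lemma mv0 (A : Matrix (Fin 3) (Fin 3) F) : A *ᵥ fanoVec F 0 = Aᵀ 0 + Aᵀ 1 := by
  funext r
  simp only [Matrix.mulVec, dotProduct, Fin.sum_univ_three]
  show A r 0 * 1 + A r 1 * 1 + A r 2 * 0 = A r 0 + A r 1
  ring

lemma mv1 (A : Matrix (Fin 3) (Fin 3) F) : A *ᵥ fanoVec F 1 = Aᵀ 0 + Aᵀ 2 := by
  funext r
  simp only [Matrix.mulVec, dotProduct, Fin.sum_univ_three]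
  show A r 0 * 1 + A r 1 * 0 + A r 2 * 1 = A r 0 + A r 2
  ring

lemma mv2 (A : Matrix (Fin 3) (Fin 3) F) : A *ᵥ fanoVec F 2 = Aᵀ 1 + Aᵀ 2 := by
  funext r
  simp only [Matrix.mulVec, dotProduct, Fin.sum_univ_three]
  show A r 0 * 0 + A r 1 * 1 + A r 2 * 1 = A r 1 + A r 2
  ring

lemma mv3 (A : Matrix (Fin 3) (Fin 3) F) : A *ᵥ fanoVec F 3 = Aᵀ 0 := by
  funext r
  simp only [Matrix.mulVec, dotProduct, Fin.sum_univ_three]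
  show A r 0 * 1 + A r 1 * 0 + A r 2 * 0 = A r 0
  ring

lemma mv4 (A : Matrix (Fin 3) (Fin 3) F) : A *ᵥ fanoVec F 4 = Aᵀ 1 := by
  funext r
  simp only [Matrix.mulVec, dotProduct, Fin.sum_univ_three]
  show A r 0 * 0 + A r 1 * 1 + A r 2 * 0 = A r 1
  ring

lemma mv5 (A : Matrix (Fin 3) (Fin 3) F) : A *ᵥ fanoVec F 5 = Aᵀ 2 := by
  funext r
  simp only [Matrix.mulVec, dotProduct, Fin.sum_univ_three]
  show A r 0 * 0 + A r 1 * 0 + A r 2 * 1 = A r 2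
  ring

lemma mv6 (A : Matrix (Fin 3) (Fin 3) F) : A *ᵥ fanoVec F 6 = Aᵀ 0 + Aᵀ 1 + Aᵀ 2 := by
  funext r
  simp only [Matrix.mulVec, dotProduct, Fin.sum_univ_three]
  show A r 0 * 1 + A r 1 * 1 + A r 2 * 1 = A r 0 + A r 1 + A r 2
  ring

noncomputable def Phi (g : GL (Fin 3) F) (i : Fin 7) : Projectivization F (Fin 3 → F) :=
  Projectivization.mk F (g.val *ᵥ fanoVec F i) (by
    haveI := g.invertible
    intro h
    exact fanoVec_ne_zero i
      (Matrix.mulVec_injective_of_invertible g.val (h.trans (Matrix.mulVec_zero g.val).symm)))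

lemma indep_mulVec_iff (g : GL (Fin 3) F) (x : Fin 3 → Fin 3 → F) :
    LinearIndependent F (fun t => g.val *ᵥ x t) ↔ LinearIndependent F x := by
  haveI := g.invertible
  have : (fun t => g.val *ᵥ x t) = (g.val.mulVecLin : (Fin 3 → F) →ₗ[F] (Fin 3 → F)) ∘ x := rfl
  rw [this]
  exact LinearMap.linearIndependent_iff _
    (LinearMap.ker_eq_bot.2 (Matrix.mulVec_injective_of_invertible g.val))

section CharTwo
variable [CharP F 2]

lemma fanoVec_eq_cast (i : Fin 7) (c : Fin 3) :
    fanoVec F i c = ZMod.castHom (dvd_refl 2) F (wZ i c) := by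
  fin_cases i <;> fin_cases c <;>
    first
      | exact (map_one (ZMod.castHom (dvd_refl 2) F)).symm
      | exact (map_zero (ZMod.castHom (dvd_refl 2) F)).symm

lemma det_fano_cast (i j k : Fin 7) :
    (Matrix.of ![fanoVec F i, fanoVec F j, fanoVec F k]).det
      = ZMod.castHom (dvd_refl 2) F ((Matrix.of ![wZ i, wZ j, wZ k]).det) := by
  have h : (Matrix.of ![fanoVec F i, fanoVec F j, fanoVec F k]) =
      (ZMod.castHom (dvd_refl 2) F).mapMatrix (Matrix.of ![wZ i, wZ j, wZ k]) := by
    ext r c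
    fin_cases r
    exacts [fanoVec_eq_cast i c, fanoVec_eq_cast j c, fanoVec_eq_cast k c]
  rw [h]
  exact (RingHom.map_det (ZMod.castHom (dvd_refl 2) F) (Matrix.of ![wZ i, wZ j, wZ k])).symm

lemma det_fano_eq_zero_iff (i j k : Fin 7) (hij : i ≠ j) (hik : i ≠ k) (hjk : j ≠ k) :
    ((Matrix.of ![fanoVec F i, fanoVec F j, fanoVec F k]).det = 0 ↔
      ({i,j,k} : Finset (Fin 7)) ∈ fanoL) := by
  rw [det_fano_cast, ← map_zero (ZMod.castHom (dvd_refl 2) F),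
    (ZMod.castHom_injective F).eq_iff]
  exact detZ_iff i j k hij hik hjk

lemma indep_fano_iff (i j k : Fin 7) (hij : i ≠ j) (hik : i ≠ k) (hjk : j ≠ k) :
    (¬ LinearIndependent F ![fanoVec F i, fanoVec F j, fanoVec F k]) ↔
      ({i,j,k} : Finset (Fin 7)) ∈ fanoL := by
  rw [indep_three_iff_det, not_not]
  exact det_fano_eq_zero_iff i j k hij hik hjk

end CharTwo
end FanoAux
section Main
variable {F : Type*} [Field F]

lemma gv_ne_zero (g : GL (Fin 3) F) (i : Fin 7) : g.val *ᵥ fanoVec F i ≠ 0 := by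
  haveI := g.invertible
  intro h
  exact fanoVec_ne_zero i
    (Matrix.mulVec_injective_of_invertible g.val (h.trans (Matrix.mulVec_zero g.val).symm))

lemma Phi_injective [CharP F 2] (g : GL (Fin 3) F) : Function.Injective (Phi g) := by
  haveI := g.invertible
  intro i j hij
  by_contra hne
  obtain ⟨u, hu⟩ := (Projectivization.mk_eq_mk_iff F _ _ _ _).1 hij
  rw [Units.smul_def, ← Matrix.mulVec_smul] at hu
  have hsmul : (u : F) • fanoVec F j = fanoVec F i :=
    Matrix.mulVec_injective_of_invertible g.val hu
  obtain ⟨k, hik, hjk, hkL⟩ := third_point i j hne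
  have hind : LinearIndependent F ![fanoVec F i, fanoVec F j, fanoVec F k] := by
    by_contra h
    exact hkL ((indep_fano_iff i j k hne hik hjk).1 h)
  have := Fintype.linearIndependent_iff.1 hind ![(1:F), -(u:F), 0] (by
    rw [Fin.sum_univ_three]
    show (1:F) • fanoVec F i + (-(u:F)) • fanoVec F j + (0:F) • fanoVec F k = 0
    rw [← hsmul]; module) 0
  simp at this

lemma Phi_pattern [CharP F 2] (g : GL (Fin 3) F) (T : Finset (Fin 7)) (hT : T.card = 3) :
    IsCollinearSetP2 F (Phi g '' ↑T) ↔ T ∈ fanoL := by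
  obtain ⟨a, b, c, hab, hac, hbc, rfl⟩ := Finset.card_eq_three.1 hT
  have himg : (Phi g '' ↑({a, b, c} : Finset (Fin 7))) = {Phi g a, Phi g b, Phi g c} := by
    simp [Set.image_insert_eq]
  rw [himg]
  have hiff := collinear_iff_of_eq_mk ![Phi g a, Phi g b, Phi g c]
    ![g.val *ᵥ fanoVec F a, g.val *ᵥ fanoVec F b, g.val *ᵥ fanoVec F c]
    (by intro t; fin_cases t <;> exact gv_ne_zero g _)
    (by intro t; fin_cases t <;> rfl)
  have hfam : ![g.val *ᵥ fanoVec F a, g.val *ᵥ fanoVec F b, g.val *ᵥ fanoVec F c]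
      = fun t => g.val *ᵥ (![fanoVec F a, fanoVec F b, fanoVec F c] t) := by
    funext t; fin_cases t <;> rfl
  rw [show ({Phi g a, Phi g b, Phi g c} : Set (Projectivization F (Fin 3 → F)))
      = {(![Phi g a, Phi g b, Phi g c]) 0, (![Phi g a, Phi g b, Phi g c]) 1,
         (![Phi g a, Phi g b, Phi g c]) 2} from rfl]
  rw [hiff, hfam, not_congr (indep_mulVec_iff g _)]
  exact indep_fano_iff a b c hab hac hbc


noncomputable def scalarGL (c : Fˣ) : GL (Fin 3) F :=
  Units.map (Matrix.scalar (Fin 3)).toMonoidHom c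

lemma scalarGL_val (c : Fˣ) : (scalarGL c).val = (c : F) • (1 : Matrix (Fin 3) (Fin 3) F) := by
  show Matrix.scalar (Fin 3) (c : F) = _
  rw [Matrix.scalar_apply, Matrix.smul_eq_diagonal_mul]
  simp

lemma Phi_rigid (g g' : GL (Fin 3) F) (h : ∀ i, Phi g i = Phi g' i) :
    ∃ c : Fˣ, g = scalarGL c * g' := by
  haveI := g.invertible
  haveI := g'.invertible
  have key : ∀ i : Fin 7, ∃ a : Fˣ, (a : F) • (g'.val *ᵥ fanoVec F i) = g.val *ᵥ fanoVec F i :=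
    fun i => (Projectivization.mk_eq_mk_iff F _ _ _ _).1 (h i) |>.imp fun a ha => by
      rw [← ha]; rfl
  obtain ⟨a3, h3⟩ := key 3
  obtain ⟨a4, h4⟩ := key 4
  obtain ⟨a5, h5⟩ := key 5
  obtain ⟨a6, h6⟩ := key 6
  rw [mv3 g'.val, mv3 g.val] at h3
  rw [mv4 g'.val, mv4 g.val] at h4
  rw [mv5 g'.val, mv5 g.val] at h5
  rw [mv6 g'.val, mv6 g.val] at h6
  have hX : LinearIndependent F (fun j => g'.valᵀ j) :=
    Matrix.linearIndependent_cols_of_invertible g'.val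
  have hcoef := Fintype.linearIndependent_iff.1 hX
    ![(a3 : F) - a6, (a4 : F) - a6, (a5 : F) - a6] (by
      rw [Fin.sum_univ_three]
      show ((a3 : F) - a6) • g'.valᵀ 0 + ((a4 : F) - a6) • g'.valᵀ 1
          + ((a5 : F) - a6) • g'.valᵀ 2 = 0
      have e6 : (a6 : F) • g'.valᵀ 0 + (a6 : F) • g'.valᵀ 1 + (a6 : F) • g'.valᵀ 2
          = (a3 : F) • g'.valᵀ 0 + (a4 : F) • g'.valᵀ 1 + (a5 : F) • g'.valᵀ 2 := by
        rw [h3, h4, h5, ← smul_add, ← smul_add, h6]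
      rw [sub_smul, sub_smul, sub_smul]
      rw [show ((a3:F) • g'.valᵀ 0 - (a6:F) • g'.valᵀ 0) + ((a4:F) • g'.valᵀ 1 - (a6:F) • g'.valᵀ 1)
          + ((a5:F) • g'.valᵀ 2 - (a6:F) • g'.valᵀ 2)
          = ((a3:F) • g'.valᵀ 0 + (a4:F) • g'.valᵀ 1 + (a5:F) • g'.valᵀ 2)
            - ((a6:F) • g'.valᵀ 0 + (a6:F) • g'.valᵀ 1 + (a6:F) • g'.valᵀ 2) from by module]
      rw [← e6]
      exact sub_self _)
  have ha3 : (a3 : F) = a6 := by have := hcoef 0; simpa [sub_eq_zero] using this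
  have ha4 : (a4 : F) = a6 := by have := hcoef 1; simpa [sub_eq_zero] using this
  have ha5 : (a5 : F) = a6 := by have := hcoef 2; simpa [sub_eq_zero] using this
  refine ⟨a6, Units.ext ?_⟩
  show g.val = (scalarGL a6 * g').val
  rw [Units.val_mul, scalarGL_val, smul_mul_assoc, one_mul]
  ext r j
  have hc : ∀ jj : Fin 3, (g.valᵀ jj) = (![(a3:F), a4, a5] jj) • g'.valᵀ jj := by
    intro jj; fin_cases jj
    exacts [h3.symm, h4.symm, h5.symm]
  fin_cases j
  · have := congrFun (hc 0) r
    simpa [ha3] using this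
  · have := congrFun (hc 1) r
    simpa [ha4] using this
  · have := congrFun (hc 2) r
    simpa [ha5] using this

lemma range_pair {α : Type*} (x y : α) : Set.range ![x, y] = {x, y} := by
  ext a
  constructor
  · rintro ⟨i, rfl⟩; fin_cases i <;> simp
  · rintro (rfl | rfl)
    · exact ⟨0, rfl⟩
    · exact ⟨1, rfl⟩

lemma finrank_span_pair {y z : Fin 3 → F} (h : LinearIndependent F ![y, z]) :
    finrank F (span F ({y, z} : Set (Fin 3 → F))) = 2 := by
  rw [← range_pair]
  simpa using finrank_span_eq_card h

lemma pair_indep {x y : Fin 3 → F} (hxy : ∀ r s : F, r • x + s • y = 0 → r = 0 ∧ s = 0) :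
    LinearIndependent F ![x, y] := by
  apply Fintype.linearIndependent_iff.2
  intro gc hsum
  rw [Fin.sum_univ_two] at hsum
  obtain ⟨h1, h2⟩ := hxy (gc 0) (gc 1) hsum
  intro t; fin_cases t <;> assumption

lemma mem_span_pair_of_not_indep {x y z : Fin 3 → F} (hyz : LinearIndependent F ![y, z])
    (h : ¬ LinearIndependent F ![x, y, z]) : x ∈ span F ({y, z} : Set (Fin 3 → F)) := by
  rw [Fintype.not_linearIndependent_iff] at h
  obtain ⟨g, hsum, t, ht⟩ := h
  rw [Fin.sum_univ_three] at hsum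
  by_cases h0 : g 0 = 0
  · exfalso
    have hsum' : g 1 • y + g 2 • z = 0 := by
      have : g 0 • x + g 1 • y + g 2 • z = 0 := hsum
      rw [h0, zero_smul, zero_add] at this
      exact this
    have := Fintype.linearIndependent_iff.1 hyz ![g 1, g 2] (by
      rw [Fin.sum_univ_two]; exact hsum')
    fin_cases t
    · exact ht h0
    · exact ht (this 0)
    · exact ht (this 1)
  · have hx : g 0 • x - ((-(g 1)) • y + (-(g 2)) • z) = 0 := by
      have h' : g 0 • x + g 1 • y + g 2 • z = 0 := hsum
      rw [← h']; module
    have hx2 : x = (g 0)⁻¹ • ((-(g 1)) • y + (-(g 2)) • z) := by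
      rw [← sub_eq_zero.1 hx, smul_smul, inv_mul_cancel₀ h0, one_smul]
    rw [hx2]
    exact Submodule.smul_mem _ _ (Submodule.add_mem _
      (Submodule.smul_mem _ _ (Submodule.subset_span (by simp)))
      (Submodule.smul_mem _ _ (Submodule.subset_span (by simp))))

lemma rank_le_one_inter {y z y' z' : Fin 3 → F} (h1 : LinearIndependent F ![y, z])
    (h2 : LinearIndependent F ![y', z'])
    (htop : (⊤ : Submodule F (Fin 3 → F)) ≤ span F (({y, z} ∪ {y', z'}) : Set (Fin 3 → F))) :
    finrank F ((span F ({y, z} : Set (Fin 3 → F))) ⊓ span F ({y', z'} : Set (Fin 3 → F)) :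
      Submodule F (Fin 3 → F)) ≤ 1 := by
  have hsup : span F ({y, z} : Set (Fin 3 → F)) ⊔ span F ({y', z'} : Set (Fin 3 → F)) = ⊤ := by
    rw [← Submodule.span_union]
    exact le_antisymm le_top htop
  have hkey := Submodule.finrank_sup_add_finrank_inf_eq
    (span F ({y, z} : Set (Fin 3 → F))) (span F ({y', z'} : Set (Fin 3 → F)))
  rw [hsup, finrank_span_pair h1, finrank_span_pair h2, finrank_top] at hkey
  have h3 : finrank F (Fin 3 → F) = 3 := by
    simp [Module.finrank_fintype_fun_eq_card]
  omega

lemma mk_eq_of_rank_le_one {W : Submodule F (Fin 3 → F)} (hW : finrank F W ≤ 1)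
    {x y : Fin 3 → F} (hx : x ∈ W) (hy : y ∈ W) (hx0 : x ≠ 0) (hy0 : y ≠ 0) :
    Projectivization.mk F x hx0 = Projectivization.mk F y hy0 := by
  have hle : span F ({x} : Set (Fin 3 → F)) ≤ W := by
    rw [Submodule.span_singleton_le_iff_mem]; exact hx
  have hWx : span F ({x} : Set (Fin 3 → F)) = W :=
    Submodule.eq_of_le_of_finrank_le hle (by rw [finrank_span_singleton hx0]; exact hW)
  have hy' : y ∈ span F ({x} : Set (Fin 3 → F)) := hWx ▸ hy
  obtain ⟨a, ha⟩ := Submodule.mem_span_singleton.1 hy'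
  have ha0 : a ≠ 0 := fun h => hy0 (by rw [← ha, h, zero_smul])
  exact ((Projectivization.mk_eq_mk_iff F _ _ _ _).2
    ⟨Units.mk0 a ha0, by simpa [Units.smul_def] using ha⟩).symm

lemma fano_surj (σ : Fin 7 → Projectivization F (Fin 3 → F))
    (hpat : ∀ T : Finset (Fin 7), T.card = 3 →
      (IsCollinearSetP2 F (σ '' ↑T) ↔ T ∈ fanoL)) :
    ∃ g : GL (Fin 3) F, ∀ i, Phi g i = σ i := by
  classical
  set u : Fin 7 → Fin 3 → F := fun i => (σ i).rep with hu
  have hcol : ∀ i j k : Fin 7, i ≠ j → i ≠ k → j ≠ k →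
      ((¬ LinearIndependent F ![u i, u j, u k]) ↔ ({i,j,k} : Finset (Fin 7)) ∈ fanoL) := by
    intro i j k hij hik hjk
    rw [← hpat {i,j,k} (Finset.card_eq_three.2 ⟨i, j, k, hij, hik, hjk, rfl⟩)]
    have himg : (σ '' ↑({i, j, k} : Finset (Fin 7))) = {σ i, σ j, σ k} := by
      simp [Set.image_insert_eq]
    rw [himg, show ({σ i, σ j, σ k} : Set (Projectivization F (Fin 3 → F)))
        = {(![σ i, σ j, σ k]) 0, (![σ i, σ j, σ k]) 1, (![σ i, σ j, σ k]) 2} from rfl,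
      collinear_iff_reps,
      show (fun t => ((![σ i, σ j, σ k]) t).rep) = ![u i, u j, u k] from
        funext fun t => by fin_cases t <;> rfl]
  have h345 : LinearIndependent F ![u 3, u 4, u 5] := by
    by_contra hn
    have := (hcol 3 4 5 (by decide) (by decide) (by decide)).1 hn
    exact absurd this (by decide)
  have hco := Fintype.linearIndependent_iff.1 h345
  have hrange : Set.range ![u 3, u 4, u 5] = ({u 3, u 4, u 5} : Set (Fin 3 → F)) := by
    rw [range_three]; rfl
  have htopS : span F ({u 3, u 4, u 5} : Set (Fin 3 → F)) = ⊤ := by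
    rw [← hrange]
    apply Submodule.eq_top_of_finrank_eq
    rw [finrank_span_eq_card h345]
    simp [Module.finrank_fintype_fun_eq_card]
  obtain ⟨cf, hcf⟩ : ∃ cf : Fin 3 → F, cf 0 • u 3 + cf 1 • u 4 + cf 2 • u 5 = u 6 := by
    have hm : u 6 ∈ span F (Set.range ![u 3, u 4, u 5]) := by
      rw [hrange, htopS]; trivial
    obtain ⟨cf, hcf⟩ := mem_span_range_iff_exists_fun F |>.1 hm
    refine ⟨cf, ?_⟩
    rw [Fin.sum_univ_three] at hcf
    exact hcf
  set α := cf 0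
  set β := cf 1
  set γ := cf 2
  have hnotmem : ∀ i j k : Fin 7, i ≠ j → i ≠ k → j ≠ k →
      ({i,j,k} : Finset (Fin 7)) ∉ fanoL → LinearIndependent F ![u i, u j, u k] := by
    intro i j k hij hik hjk hmem
    by_contra hn
    exact hmem ((hcol i j k hij hik hjk).1 hn)
  have hα : α ≠ 0 := by
    intro h0
    have h456 := hnotmem 4 5 6 (by decide) (by decide) (by decide) (by decide)
    have := Fintype.linearIndependent_iff.1 h456 ![β, γ, -1] (by
      rw [Fin.sum_univ_three]
      show β • u 4 + γ • u 5 + (-1 : F) • u 6 = 0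
      rw [← hcf, h0]
      module) 2
    norm_num [Matrix.cons_val_two] at this
  have hβ : β ≠ 0 := by
    intro h0
    have h356 := hnotmem 3 5 6 (by decide) (by decide) (by decide) (by decide)
    have := Fintype.linearIndependent_iff.1 h356 ![α, γ, -1] (by
      rw [Fin.sum_univ_three]
      show α • u 3 + γ • u 5 + (-1 : F) • u 6 = 0
      rw [← hcf, h0]
      module) 2
    norm_num [Matrix.cons_val_two] at this
  have hγ : γ ≠ 0 := by
    intro h0
    have h346 := hnotmem 3 4 6 (by decide) (by decide) (by decide) (by decide)
    have := Fintype.linearIndependent_iff.1 h346 ![α, β, -1] (by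
      rw [Fin.sum_univ_three]
      show α • u 3 + β • u 4 + (-1 : F) • u 6 = 0
      rw [← hcf, h0]
      module) 2
    norm_num [Matrix.cons_val_two] at this
  have hcomp : ∀ f : Fin 2 → Fin 3, Function.Injective f →
      LinearIndependent F (![u 3, u 4, u 5] ∘ f) := fun f hf => h345.comp f hf
  have h34 : LinearIndependent F ![u 3, u 4] := by
    have := hcomp ![0, 1] (by decide)
    rwa [show ![u 3, u 4, u 5] ∘ ![0, 1] = ![u 3, u 4] from
      funext fun t => by fin_cases t <;> rfl] at this
  have h35 : LinearIndependent F ![u 3, u 5] := by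
    have := hcomp ![0, 2] (by decide)
    rwa [show ![u 3, u 4, u 5] ∘ ![0, 2] = ![u 3, u 5] from
      funext fun t => by fin_cases t <;> rfl] at this
  have h45 : LinearIndependent F ![u 4, u 5] := by
    have := hcomp ![1, 2] (by decide)
    rwa [show ![u 3, u 4, u 5] ∘ ![1, 2] = ![u 4, u 5] from
      funext fun t => by fin_cases t <;> rfl] at this
  have h56 : LinearIndependent F ![u 5, u 6] := by
    apply pair_indep
    intro r s hrs
    have key := hco ![s * α, s * β, r + s * γ] (by
      rw [Fin.sum_univ_three]
      show (s * α) • u 3 + (s * β) • u 4 + (r + s * γ) • u 5 = 0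
      rw [← hrs, ← hcf]
      module)
    have hs : s = 0 := by
      have := key 0
      simp at this
      rcases this with h | h
      · exact h
      · exact absurd h hα
    constructor
    · have := key 2
      simp [hs] at this
      exact this
    · exact hs
  have h46 : LinearIndependent F ![u 4, u 6] := by
    apply pair_indep
    intro r s hrs
    have key := hco ![s * α, r + s * β, s * γ] (by
      rw [Fin.sum_univ_three]
      show (s * α) • u 3 + (r + s * β) • u 4 + (s * γ) • u 5 = 0
      rw [← hrs, ← hcf]
      module)
    have hs : s = 0 := by
      have := key 0
      simp at this
      rcases this with h | h
      · exact h
      · exact absurd h hα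
    constructor
    · have := key 1
      simp [hs] at this
      exact this
    · exact hs
  have h36 : LinearIndependent F ![u 3, u 6] := by
    apply pair_indep
    intro r s hrs
    have key := hco ![r + s * α, s * β, s * γ] (by
      rw [Fin.sum_univ_three]
      show (r + s * α) • u 3 + (s * β) • u 4 + (s * γ) • u 5 = 0
      rw [← hrs, ← hcf]
      module)
    have hs : s = 0 := by
      have := key 1
      simp at this
      rcases this with h | h
      · exact h
      · exact absurd h hβ
    constructor
    · have := key 0
      simp [hs] at this
      exact this
    · exact hs
  -- the three diagonal vectors
  set x0 : Fin 3 → F := α • u 3 + β • u 4 with hx0def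
  set x1 : Fin 3 → F := α • u 3 + γ • u 5 with hx1def
  set x2 : Fin 3 → F := β • u 4 + γ • u 5 with hx2def
  have hx0ne : x0 ≠ 0 := by
    intro h0
    have h0' : α • u 3 + β • u 4 = 0 := by rw [← hx0def]; exact h0
    have := hco ![α, β, 0] (by
      rw [Fin.sum_univ_three]
      show α • u 3 + β • u 4 + (0 : F) • u 5 = 0
      rw [show α • u 3 + β • u 4 + (0 : F) • u 5 = α • u 3 + β • u 4 from by module, h0']) 0
    exact hα this
  have hx1ne : x1 ≠ 0 := by
    intro h0
    have h0' : α • u 3 + γ • u 5 = 0 := by rw [← hx1def]; exact h0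
    have := hco ![α, 0, γ] (by
      rw [Fin.sum_univ_three]
      show α • u 3 + (0 : F) • u 4 + γ • u 5 = 0
      rw [show α • u 3 + (0 : F) • u 4 + γ • u 5 = α • u 3 + γ • u 5 from by module, h0']) 0
    exact hα this
  have hx2ne : x2 ≠ 0 := by
    intro h0
    have h0' : β • u 4 + γ • u 5 = 0 := by rw [← hx2def]; exact h0
    have := hco ![0, β, γ] (by
      rw [Fin.sum_univ_three]
      show (0 : F) • u 3 + β • u 4 + γ • u 5 = 0
      rw [show (0 : F) • u 3 + β • u 4 + γ • u 5 = β • u 4 + γ • u 5 from by module, h0']) 1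
    exact hβ this
  -- memberships of the diagonal vectors in the relevant lines
  have hx0mem1 : x0 ∈ span F ({u 3, u 4} : Set (Fin 3 → F)) := by
    rw [hx0def]
    exact Submodule.add_mem _ (Submodule.smul_mem _ _ (Submodule.subset_span (by simp)))
      (Submodule.smul_mem _ _ (Submodule.subset_span (by simp)))
  have hx0eq2 : x0 = u 6 - γ • u 5 := by rw [hx0def, ← hcf]; module
  have hx0mem2 : x0 ∈ span F ({u 5, u 6} : Set (Fin 3 → F)) := by
    rw [hx0eq2]
    exact Submodule.sub_mem _ (Submodule.subset_span (by simp))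
      (Submodule.smul_mem _ _ (Submodule.subset_span (by simp)))
  have hx1mem1 : x1 ∈ span F ({u 3, u 5} : Set (Fin 3 → F)) := by
    rw [hx1def]
    exact Submodule.add_mem _ (Submodule.smul_mem _ _ (Submodule.subset_span (by simp)))
      (Submodule.smul_mem _ _ (Submodule.subset_span (by simp)))
  have hx1eq2 : x1 = u 6 - β • u 4 := by rw [hx1def, ← hcf]; module
  have hx1mem2 : x1 ∈ span F ({u 4, u 6} : Set (Fin 3 → F)) := by
    rw [hx1eq2]
    exact Submodule.sub_mem _ (Submodule.subset_span (by simp))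
      (Submodule.smul_mem _ _ (Submodule.subset_span (by simp)))
  have hx2mem1 : x2 ∈ span F ({u 4, u 5} : Set (Fin 3 → F)) := by
    rw [hx2def]
    exact Submodule.add_mem _ (Submodule.smul_mem _ _ (Submodule.subset_span (by simp)))
      (Submodule.smul_mem _ _ (Submodule.subset_span (by simp)))
  have hx2eq2 : x2 = u 6 - α • u 3 := by rw [hx2def, ← hcf]; module
  have hx2mem2 : x2 ∈ span F ({u 3, u 6} : Set (Fin 3 → F)) := by
    rw [hx2eq2]
    exact Submodule.sub_mem _ (Submodule.subset_span (by simp))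
      (Submodule.smul_mem _ _ (Submodule.subset_span (by simp)))
  -- memberships of the representatives of the diagonal points
  have hmem034 : u 0 ∈ span F ({u 3, u 4} : Set (Fin 3 → F)) :=
    mem_span_pair_of_not_indep h34
      ((hcol 0 3 4 (by decide) (by decide) (by decide)).2 (by decide))
  have hmem056 : u 0 ∈ span F ({u 5, u 6} : Set (Fin 3 → F)) :=
    mem_span_pair_of_not_indep h56
      ((hcol 0 5 6 (by decide) (by decide) (by decide)).2 (by decide))
  have hmem135 : u 1 ∈ span F ({u 3, u 5} : Set (Fin 3 → F)) :=
    mem_span_pair_of_not_indep h35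
      ((hcol 1 3 5 (by decide) (by decide) (by decide)).2 (by decide))
  have hmem146 : u 1 ∈ span F ({u 4, u 6} : Set (Fin 3 → F)) :=
    mem_span_pair_of_not_indep h46
      ((hcol 1 4 6 (by decide) (by decide) (by decide)).2 (by decide))
  have hmem245 : u 2 ∈ span F ({u 4, u 5} : Set (Fin 3 → F)) :=
    mem_span_pair_of_not_indep h45
      ((hcol 2 4 5 (by decide) (by decide) (by decide)).2 (by decide))
  have hmem236 : u 2 ∈ span F ({u 3, u 6} : Set (Fin 3 → F)) :=
    mem_span_pair_of_not_indep h36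
      ((hcol 2 3 6 (by decide) (by decide) (by decide)).2 (by decide))
  -- the three intersections have rank at most one
  have hW0 : finrank F ((span F ({u 3, u 4} : Set (Fin 3 → F))) ⊓
      span F ({u 5, u 6} : Set (Fin 3 → F)) : Submodule F (Fin 3 → F)) ≤ 1 :=
    rank_le_one_inter h34 h56 (by
      refine le_trans (le_of_eq htopS.symm) (Submodule.span_mono ?_)
      intro t ht
      simp only [Set.mem_insert_iff, Set.mem_singleton_iff, Set.mem_union] at ht ⊢
      tauto)
  have hW1 : finrank F ((span F ({u 3, u 5} : Set (Fin 3 → F))) ⊓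
      span F ({u 4, u 6} : Set (Fin 3 → F)) : Submodule F (Fin 3 → F)) ≤ 1 :=
    rank_le_one_inter h35 h46 (by
      refine le_trans (le_of_eq htopS.symm) (Submodule.span_mono ?_)
      intro t ht
      simp only [Set.mem_insert_iff, Set.mem_singleton_iff, Set.mem_union] at ht ⊢
      tauto)
  have hW2 : finrank F ((span F ({u 4, u 5} : Set (Fin 3 → F))) ⊓
      span F ({u 3, u 6} : Set (Fin 3 → F)) : Submodule F (Fin 3 → F)) ≤ 1 :=
    rank_le_one_inter h45 h36 (by
      refine le_trans (le_of_eq htopS.symm) (Submodule.span_mono ?_)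
      intro t ht
      simp only [Set.mem_insert_iff, Set.mem_singleton_iff, Set.mem_union] at ht ⊢
      tauto)
  -- the matrix
  set B : Matrix (Fin 3) (Fin 3) F := Matrix.of ![α • u 3, β • u 4, γ • u 5] with hBdef
  have hBrows : LinearIndependent F (fun t => B t) := by
    have hsm := h345.units_smul ![Units.mk0 α hα, Units.mk0 β hβ, Units.mk0 γ hγ]
    rwa [show (![Units.mk0 α hα, Units.mk0 β hβ, Units.mk0 γ hγ] • ![u 3, u 4, u 5])
        = fun t => B t from funext fun t => by fin_cases t <;> rfl] at hsm
  have hBunit : IsUnit B := Matrix.linearIndependent_rows_iff_isUnit.1 hBrows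
  have hAunit : IsUnit Bᵀ := (Matrix.isUnit_transpose B).2 hBunit
  refine ⟨hAunit.unit, ?_⟩
  have hgA : (hAunit.unit : Matrix (Fin 3) (Fin 3) F) = Bᵀ := hAunit.unit_spec
  have e0 : (hAunit.unit : Matrix (Fin 3) (Fin 3) F) *ᵥ fanoVec F 0 = x0 := by
    rw [hgA, mv0]; exact hx0def.symm
  have e1 : (hAunit.unit : Matrix (Fin 3) (Fin 3) F) *ᵥ fanoVec F 1 = x1 := by
    rw [hgA, mv1]; exact hx1def.symm
  have e2 : (hAunit.unit : Matrix (Fin 3) (Fin 3) F) *ᵥ fanoVec F 2 = x2 := by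
    rw [hgA, mv2]; exact hx2def.symm
  have e3 : (hAunit.unit : Matrix (Fin 3) (Fin 3) F) *ᵥ fanoVec F 3 = α • u 3 := by
    rw [hgA, mv3]; rfl
  have e4 : (hAunit.unit : Matrix (Fin 3) (Fin 3) F) *ᵥ fanoVec F 4 = β • u 4 := by
    rw [hgA, mv4]; rfl
  have e5 : (hAunit.unit : Matrix (Fin 3) (Fin 3) F) *ᵥ fanoVec F 5 = γ • u 5 := by
    rw [hgA, mv5]; rfl
  have e6 : (hAunit.unit : Matrix (Fin 3) (Fin 3) F) *ᵥ fanoVec F 6 = u 6 := by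
    rw [hgA, mv6]
    exact hcf
  intro i
  fin_cases i
  · show Phi hAunit.unit 0 = σ 0
    rw [← Projectivization.mk_rep (σ 0)]
    exact mk_eq_of_rank_le_one hW0 (by rw [e0]; exact Submodule.mem_inf.2 ⟨hx0mem1, hx0mem2⟩)
      (Submodule.mem_inf.2 ⟨hmem034, hmem056⟩) _ _
  · show Phi hAunit.unit 1 = σ 1
    rw [← Projectivization.mk_rep (σ 1)]
    exact mk_eq_of_rank_le_one hW1 (by rw [e1]; exact Submodule.mem_inf.2 ⟨hx1mem1, hx1mem2⟩)
      (Submodule.mem_inf.2 ⟨hmem135, hmem146⟩) _ _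
  · show Phi hAunit.unit 2 = σ 2
    rw [← Projectivization.mk_rep (σ 2)]
    exact mk_eq_of_rank_le_one hW2 (by rw [e2]; exact Submodule.mem_inf.2 ⟨hx2mem1, hx2mem2⟩)
      (Submodule.mem_inf.2 ⟨hmem245, hmem236⟩) _ _
  · show Phi hAunit.unit 3 = σ 3
    rw [← Projectivization.mk_rep (σ 3)]
    exact (Projectivization.mk_eq_mk_iff F _ _ _ _).2 ⟨Units.mk0 α hα, e3.symm⟩
  · show Phi hAunit.unit 4 = σ 4
    rw [← Projectivization.mk_rep (σ 4)]
    exact (Projectivization.mk_eq_mk_iff F _ _ _ _).2 ⟨Units.mk0 β hβ, e4.symm⟩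
  · show Phi hAunit.unit 5 = σ 5
    rw [← Projectivization.mk_rep (σ 5)]
    exact (Projectivization.mk_eq_mk_iff F _ _ _ _).2 ⟨Units.mk0 γ hγ, e5.symm⟩
  · show Phi hAunit.unit 6 = σ 6
    rw [← Projectivization.mk_rep (σ 6)]
    exact (Projectivization.mk_eq_mk_iff F _ _ _ _).2 ⟨1, by rw [one_smul]; exact e6.symm⟩


lemma Phi_scalar (c : Fˣ) (g : GL (Fin 3) F) (i : Fin 7) :
    Phi (scalarGL c * g) i = Phi g i := by
  apply (Projectivization.mk_eq_mk_iff F _ _ _ _).2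
  refine ⟨c, ?_⟩
  show (c : F) • (g.val *ᵥ fanoVec F i) = (scalarGL c * g).val *ᵥ fanoVec F i
  rw [Units.val_mul, scalarGL_val, smul_mul_assoc, one_mul, Matrix.smul_mulVec]

lemma scalarGL_injective : Function.Injective (scalarGL : Fˣ → GL (Fin 3) F) := by
  intro c c' h
  have hval : (scalarGL c).val = (scalarGL c' : GL (Fin 3) F).val := by rw [h]
  rw [scalarGL_val, scalarGL_val] at hval
  have := congrFun (congrFun hval 0) 0
  refine Units.ext ?_
  simpa [Matrix.one_apply] using this

end Main


/-- The number of injective maps `σ` from `{0,…,6}` to `ℙ²(𝔽_q)` such that, for every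
3-element subset `T` of `{0,…,6}`, the set `σ(T)` is collinear if and only if `T` is one of
the seven Fano lines `{0,1,2},{0,3,4},{0,5,6},{1,3,5},{1,4,6},{2,3,6},{2,4,5}`, equals
`|PGL₃(𝔽_q)| = q³(q³−1)(q²−1)` if `q` is even, and equals `0` if `q` is odd. -/
theorem count_fano_embeddings (q : ℕ) (F : Type*) [Field F] [Fintype F]
    (hq : Fintype.card F = q) :
    (Nat.card {σ : Fin 7 → Projectivization F (Fin 3 → F) //
        Function.Injective σ ∧
          ∀ T : Finset (Fin 7), T.card = 3 →
            (IsCollinearSetP2 F (σ '' ↑T) ↔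
              T ∈ ({{0, 1, 2}, {0, 3, 4}, {0, 5, 6}, {1, 3, 5}, {1, 4, 6}, {2, 3, 6},
                {2, 4, 5}} : Finset (Finset (Fin 7))))} : ℤ) =
      if Even q then (q : ℤ) ^ 3 * ((q : ℤ) ^ 3 - 1) * ((q : ℤ) ^ 2 - 1) else 0 := by
  classical
  haveI := ringChar.charP F
  obtain ⟨n, hp, hcard⟩ := FiniteField.card F (ringChar F)
  have hq1 : 1 < q := hq ▸ Fintype.one_lt_card
  by_cases hq2 : Even q
  · -- even case
    have hp2 : ringChar F = 2 := by
      have h2q : (2 : ℕ) ∣ ringChar F ^ (n : ℕ) := by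
        rw [← hcard, hq]
        exact hq2.two_dvd
      have h2p : (2 : ℕ) ∣ ringChar F := Nat.Prime.dvd_of_dvd_pow Nat.prime_two h2q
      exact ((Nat.prime_dvd_prime_iff_eq Nat.prime_two hp).1 h2p).symm
    haveI : CharP F 2 := hp2 ▸ ringChar.charP F
    set Emb := {σ : Fin 7 → Projectivization F (Fin 3 → F) //
        Function.Injective σ ∧
          ∀ T : Finset (Fin 7), T.card = 3 →
            (IsCollinearSetP2 F (σ '' ↑T) ↔
              T ∈ ({{0, 1, 2}, {0, 3, 4}, {0, 5, 6}, {1, 3, 5}, {1, 4, 6}, {2, 3, 6},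
                {2, 4, 5}} : Finset (Finset (Fin 7))))} with hEmb
    have hchoose : ∀ σ : Emb, ∃ g : GL (Fin 3) F, ∀ i, Phi g i = σ.val i :=
      fun σ => fano_surj σ.val σ.prop.2
    let M : Emb → GL (Fin 3) F := fun σ => Classical.choose (hchoose σ)
    have hM : ∀ σ : Emb, ∀ i, Phi (M σ) i = σ.val i := fun σ => Classical.choose_spec (hchoose σ)
    let f : Fˣ × Emb → GL (Fin 3) F := fun p => scalarGL p.1 * M p.2
    have hPhif : ∀ p : Fˣ × Emb, ∀ i, Phi (f p) i = p.2.val i := by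
      intro p i
      exact (Phi_scalar p.1 (M p.2) i).trans (hM p.2 i)
    have hbij : Function.Bijective f := by
      constructor
      · rintro ⟨c, σ⟩ ⟨c', σ'⟩ heq
        have hσ : σ = σ' := by
          apply Subtype.ext
          funext i
          rw [← hPhif (c, σ) i, ← hPhif (c', σ') i]
          show Phi (f (c, σ)) i = Phi (f (c', σ')) i
          rw [heq]
        subst hσ
        have hc : scalarGL c = scalarGL c' := by
          have := heq
          simp only [f] at this
          exact mul_right_cancel this
        rw [scalarGL_injective hc]
      · intro g
        have hg : ∀ i, Phi g i = (Phi g) i := fun i => rfl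
        have hmem : Function.Injective (Phi g) ∧
            ∀ T : Finset (Fin 7), T.card = 3 →
              (IsCollinearSetP2 F (Phi g '' ↑T) ↔
                T ∈ ({{0, 1, 2}, {0, 3, 4}, {0, 5, 6}, {1, 3, 5}, {1, 4, 6}, {2, 3, 6},
                  {2, 4, 5}} : Finset (Finset (Fin 7)))) :=
          ⟨Phi_injective g, fun T hT => Phi_pattern g T hT⟩
        set σg : Emb := ⟨Phi g, hmem⟩ with hσg
        obtain ⟨c, hc⟩ := Phi_rigid g (M σg) (fun i => (hM σg i).symm)
        exact ⟨(c, σg), hc.symm⟩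
    have hcardEq : Nat.card (Fˣ × Emb) = Nat.card (GL (Fin 3) F) :=
      Nat.card_congr (Equiv.ofBijective f hbij)
    have hGL := Matrix.card_GL_field (𝔽 := F) 3
    rw [Fin.prod_univ_three] at hGL
    simp only [hq, Fin.val_zero, pow_zero, Fin.val_one, pow_one, Fin.val_two] at hGL
    rw [Nat.card_prod, Nat.card_eq_fintype_card, Fintype.card_units, hq] at hcardEq
    rw [hGL] at hcardEq
    have h1q : 1 ≤ q := le_of_lt hq1
    have hq3 : q ≤ q ^ 3 := by
      calc q = q ^ 1 := (pow_one q).symm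
      _ ≤ q ^ 3 := Nat.pow_le_pow_right (by omega) (by omega)
    have hq23 : q ^ 2 ≤ q ^ 3 := Nat.pow_le_pow_right (by omega) (by omega)
    have h1q3 : 1 ≤ q ^ 3 := Nat.one_le_pow _ _ (by omega)
    have h1q2 : 1 ≤ q ^ 2 := Nat.one_le_pow _ _ (by omega)
    have hN : Nat.card Emb = q ^ 3 * (q ^ 3 - 1) * (q ^ 2 - 1) := by
      apply Nat.eq_of_mul_eq_mul_left (show 0 < q - 1 by omega)
      rw [hcardEq]
      zify [h1q, hq3, hq23, h1q3, h1q2]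
      ring
    rw [if_pos hq2]
    rw [show (Nat.card {σ : Fin 7 → Projectivization F (Fin 3 → F) //
        Function.Injective σ ∧
          ∀ T : Finset (Fin 7), T.card = 3 →
            (IsCollinearSetP2 F (σ '' ↑T) ↔
              T ∈ ({{0, 1, 2}, {0, 3, 4}, {0, 5, 6}, {1, 3, 5}, {1, 4, 6}, {2, 3, 6},
                {2, 4, 5}} : Finset (Finset (Fin 7))))}) = Nat.card Emb from rfl, hN]
    push_cast [Nat.cast_sub h1q3, Nat.cast_sub h1q2]
    ring
  · -- odd case
    have hodd : ringChar F ≠ 2 := by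
      intro h2
      apply hq2
      rw [← hq, hcard, h2]
      exact Nat.even_pow.2 ⟨even_two, n.ne_zero⟩
    have hempty : IsEmpty {σ : Fin 7 → Projectivization F (Fin 3 → F) //
        Function.Injective σ ∧
          ∀ T : Finset (Fin 7), T.card = 3 →
            (IsCollinearSetP2 F (σ '' ↑T) ↔
              T ∈ ({{0, 1, 2}, {0, 3, 4}, {0, 5, 6}, {1, 3, 5}, {1, 4, 6}, {2, 3, 6},
                {2, 4, 5}} : Finset (Finset (Fin 7))))} := by
      refine ⟨fun σ => ?_⟩
      obtain ⟨g, hg⟩ := fano_surj σ.val σ.prop.2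
      have hcol : IsCollinearSetP2 F (σ.val '' ↑({0,1,2} : Finset (Fin 7))) :=
        (σ.prop.2 {0,1,2} (by decide)).2 (by decide)
      have himg : σ.val '' ↑({0,1,2} : Finset (Fin 7)) = {σ.val 0, σ.val 1, σ.val 2} := by
        simp [Set.image_insert_eq]
      rw [himg] at hcol
      have hiff := collinear_iff_of_eq_mk ![σ.val 0, σ.val 1, σ.val 2]
        ![g.val *ᵥ fanoVec F 0, g.val *ᵥ fanoVec F 1, g.val *ᵥ fanoVec F 2]
        (by intro t; fin_cases t <;> exact gv_ne_zero g _)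
        (by intro t; fin_cases t <;> exact (hg _).symm)
      have hnLI := hiff.1 hcol
      rw [show ![g.val *ᵥ fanoVec F 0, g.val *ᵥ fanoVec F 1, g.val *ᵥ fanoVec F 2]
          = fun t => g.val *ᵥ (![fanoVec F 0, fanoVec F 1, fanoVec F 2] t) from
          funext fun t => by fin_cases t <;> rfl, indep_mulVec_iff] at hnLI
      have hdet0 : (Matrix.of ![fanoVec F 0, fanoVec F 1, fanoVec F 2]).det = 0 := by
        by_contra hd
        exact hnLI ((indep_three_iff_det _).2 hd)
      have hdetval : (Matrix.of ![fanoVec F 0, fanoVec F 1, fanoVec F 2]).det = -2 := by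
        rw [Matrix.det_fin_three]
        show (1:F) * 0 * 1 - 1 * 1 * 1 - 1 * 1 * 1 + 1 * 1 * 0 + 0 * 1 * 1 - 0 * 0 * 0 = -2
        norm_num
      have h20 : (2 : F) = 0 := by
        have h02 : (0 : F) = -2 := hdet0.symm.trans hdetval
        exact neg_eq_zero.1 h02.symm
      have hdvd : ringChar F ∣ 2 := by
        have : ((2 : ℕ) : F) = 0 := by exact_mod_cast h20
        exact (CharP.cast_eq_zero_iff F (ringChar F) 2).1 this
      have hle := Nat.le_of_dvd (by norm_num) hdvd
      have h2le := hp.two_le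
      exact hodd (by omega)
    rw [if_neg hq2]
    rw [Nat.card_of_isEmpty]
    norm_num
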